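/- For any real D×N matrix W with columns w_1,…,w_N, the sum of the capacities satisfies Σ_{i=1}^N C_i(W) ≤ D. -/

import Mathlib

open scoped BigOperators

/-- The capacity of feature `i` for an embedding matrix `W` with columns
`w_i = W · eᵢ`: `C_i = (w_i·w_i)² / (∑_j (w_i·w_j)²)`. When `w_i = 0` both the
numerator and the denominator vanish, and Lean's convention `0 / 0 = 0` gives
`C_i = 0`, matching the convention in the paper. -/
noncomputable def capacity {D N : ℕ} (W : Matrix (Fin D) (Fin N) ℝ) (i : Fin N) : ℝ :=
  (∑ a, W a i * W a i) ^ 2 / ∑ j, (∑ a, W a i * W a j) ^ 2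

/-- Key coordinate inequality: if `v` lies in a subspace with orthonormal basis `b`,
then `(v i)² / ‖v‖² ≤ ∑ k, (b k i)²`. -/
lemma coord_sq_div_le {N r : ℕ} {V : Submodule ℝ (EuclideanSpace ℝ (Fin N))}
    (b : OrthonormalBasis (Fin r) ℝ V) (v : EuclideanSpace ℝ (Fin N)) (hv : v ∈ V)
    (i : Fin N) :
    (v i) ^ 2 / (∑ j, (v j) ^ 2) ≤ ∑ k, ((b k : EuclideanSpace ℝ (Fin N)) i) ^ 2 := by
  set u : V := ⟨v, hv⟩ with hu
  set c : Fin r → ℝ := fun k => inner ℝ (b k) u with hc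
  have hrep : ∀ j, v j = ∑ k, c k * (b k : EuclideanSpace ℝ (Fin N)) j := by
    intro j
    have h := b.sum_repr u
    have h' : ((∑ k, b.repr u k • b k : V) : EuclideanSpace ℝ (Fin N)) = v := by
      rw [h]
    have h'' : (∑ k, b.repr u k • (b k : EuclideanSpace ℝ (Fin N))) = v := by
      simpa using h'
    -- move to the plain Pi type (defeq)
    have h3 : (∑ k, b.repr u k • (((b k : EuclideanSpace ℝ (Fin N))) : Fin N → ℝ)) =
        (v : Fin N → ℝ) := by simpa using congrArg WithLp.ofLp h''
    have h4 := congrFun h3 j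
    rw [Finset.sum_apply] at h4
    rw [← h4]
    refine Finset.sum_congr rfl fun k _ => ?_
    rw [b.repr_apply_apply]
    rfl
  have hnorm : (∑ j, (v j) ^ 2) = ∑ k, (c k) ^ 2 := by
    have h1 : (inner ℝ u u : ℝ) = ∑ j, (v j) ^ 2 := by
      rw [Submodule.coe_inner]
      simp only [PiLp.inner_apply, hu, sq, Submodule.coe_mk, RCLike.inner_apply, conj_trivial]
    have h2 : (∑ k, (inner ℝ u (b k) : ℝ) * inner ℝ (b k) u) = inner ℝ u u :=
      b.sum_inner_mul_inner u u
    have h3 : ∀ k, (inner ℝ u (b k) : ℝ) = c k := fun k => (real_inner_comm u (b k)).symm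
    calc (∑ j, (v j) ^ 2) = ∑ k, (inner ℝ u (b k) : ℝ) * inner ℝ (b k) u := by rw [h2, h1]
      _ = ∑ k, (c k) ^ 2 := by
          refine Finset.sum_congr rfl fun k _ => ?_
          rw [h3 k, sq, hc]
  rcases eq_or_ne (∑ j, (v j) ^ 2) 0 with h0 | h0
  · rw [h0, div_zero]
    positivity
  · have hpos : 0 < ∑ j, (v j) ^ 2 := by
      rcases (Finset.sum_nonneg (fun j _ => sq_nonneg (v j))).lt_or_eq with h | h
      · exact h
      · exact absurd h.symm h0
    rw [div_le_iff₀ hpos]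
    have hCS : (v i) ^ 2 ≤ (∑ k, ((b k : EuclideanSpace ℝ (Fin N)) i) ^ 2) * ∑ k, (c k) ^ 2 := by
      rw [hrep i]
      calc (∑ k, c k * (b k : EuclideanSpace ℝ (Fin N)) i) ^ 2
          = (∑ k, ((b k : EuclideanSpace ℝ (Fin N)) i) * c k) ^ 2 := by
            congr 1; exact Finset.sum_congr rfl fun k _ => mul_comm _ _
        _ ≤ (∑ k, ((b k : EuclideanSpace ℝ (Fin N)) i) ^ 2) * ∑ k, (c k) ^ 2 :=
            Finset.sum_mul_sq_le_sq_mul_sq _ _ _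
    rw [hnorm]
    exact hCS

/-- For any real `D × N` matrix `W`, the total capacity satisfies
`∑ i, C_i(W) ≤ D`. -/
theorem total_capacity_le_dim {D N : ℕ} (W : Matrix (Fin D) (Fin N) ℝ) :
    ∑ i, capacity W i ≤ (D : ℝ) := by
  classical
  -- the linear map x ↦ Wᵀ x, between Euclidean spaces
  let f : EuclideanSpace ℝ (Fin D) →ₗ[ℝ] EuclideanSpace ℝ (Fin N) :=
    (EuclideanSpace.equiv (Fin N) ℝ).symm.toLinearEquiv.toLinearMap ∘ₗ
      (Matrix.mulVecLin W.transpose) ∘ₗ (EuclideanSpace.equiv (Fin D) ℝ).toLinearEquiv.toLinearMap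
  set V : Submodule ℝ (EuclideanSpace ℝ (Fin N)) := LinearMap.range f with hV
  have hdim : Module.finrank ℝ V ≤ D := by
    calc Module.finrank ℝ V ≤ Module.finrank ℝ (EuclideanSpace ℝ (Fin D)) :=
          LinearMap.finrank_range_le f
      _ = D := finrank_euclideanSpace_fin
  set r := Module.finrank ℝ V with hr
  let b : OrthonormalBasis (Fin r) ℝ V := stdOrthonormalBasis ℝ V
  -- the vectors m i = Wᵀ w_i
  have key : ∀ i : Fin N, capacity W i ≤ ∑ k, ((b k : EuclideanSpace ℝ (Fin N)) i) ^ 2 := by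
    intro i
    set v : EuclideanSpace ℝ (Fin N) := WithLp.toLp 2 (fun j => ∑ a, W a i * W a j) with hvdef
    have hv : v ∈ V := by
      refine ⟨WithLp.toLp 2 (fun a => W a i), ?_⟩
      ext j
      simp [f, hvdef, Matrix.mulVec, dotProduct, Matrix.transpose_apply, mul_comm]
      show Matrix.vecMul (fun a => W a i) W j = _
      simp [Matrix.vecMul, dotProduct]
    have hcap : capacity W i = (v i) ^ 2 / ∑ j, (v j) ^ 2 := by
      simp [capacity, hvdef]
    rw [hcap]
    exact coord_sq_div_le b v hv i
  calc ∑ i, capacity W i ≤ ∑ i, ∑ k, ((b k : EuclideanSpace ℝ (Fin N)) i) ^ 2 :=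
        Finset.sum_le_sum fun i _ => key i
    _ = ∑ k, ∑ i, ((b k : EuclideanSpace ℝ (Fin N)) i) ^ 2 := Finset.sum_comm
    _ = ∑ k : Fin r, (1 : ℝ) := by
        refine Finset.sum_congr rfl fun k _ => ?_
        have h1 : (inner ℝ (b k) (b k) : ℝ) = 1 := by
          have := b.orthonormal.1 k
          rw [real_inner_self_eq_norm_sq, this]; norm_num
        rw [Submodule.coe_inner, PiLp.inner_apply] at h1
        simpa [sq] using h1
    _ = (r : ℝ) := by simp
    _ ≤ (D : ℝ) := by exact_mod_cast hdim
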